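/- Let (G,P) be a quasi-lattice ordered group with left regular representation L : P → B(ℓ²(P)) given by L_p ε_x = ε_{px}. Then for all p, q ∈ P: L_p L_p* L_q L_q* = L_{p∨q} L_{p∨q}* if p and q have a common upper bound, and L_p L_p* L_q L_q* = 0 otherwise. -/

import Mathlib

set_option maxHeartbeats 1000000 in
open Classical in
/-- Nica covariance for the left regular representation: for the
isometries `L_p ε_x = ε_{px}` on `ℓ²(P)`, we have
`L_p L_p* L_q L_q* = L_{p∨q} L_{p∨q}*` when `p ∨ q` exists, and `= 0` when `p` and `q`
have no common upper bound. -/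
theorem stmt11 {G : Type*} [Group G] [DecidableEq G] (P : Submonoid G)
    (hP : ∀ g : G, g ∈ P → g⁻¹ ∈ P → g = 1)
    (hQL : ∀ x y : G, (∃ u, x⁻¹ * u ∈ P ∧ y⁻¹ * u ∈ P) →
      ∃ m, (x⁻¹ * m ∈ P ∧ y⁻¹ * m ∈ P) ∧
        ∀ u, x⁻¹ * u ∈ P → y⁻¹ * u ∈ P → m⁻¹ * u ∈ P)
    (L : P → lp (fun _ : P => ℂ) 2 →L[ℂ] lp (fun _ : P => ℂ) 2)
    (hL : ∀ p x : P, L p (lp.single 2 x 1) = lp.single 2 (p * x) 1)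
    (p q : P) :
    (∀ m : P, ((p : G)⁻¹ * m ∈ P ∧ (q : G)⁻¹ * m ∈ P ∧
        ∀ u, (p : G)⁻¹ * u ∈ P → (q : G)⁻¹ * u ∈ P → (m : G)⁻¹ * u ∈ P) →
      L p * ContinuousLinearMap.adjoint (L p) * (L q * ContinuousLinearMap.adjoint (L q))
        = L m * ContinuousLinearMap.adjoint (L m)) ∧
    ((¬ ∃ u : G, (p : G)⁻¹ * u ∈ P ∧ (q : G)⁻¹ * u ∈ P) →
      L p * ContinuousLinearMap.adjoint (L p) * (L q * ContinuousLinearMap.adjoint (L q))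
        = 0) := by
  -- coordinates via inner products with singles
  have coord : ∀ (f : lp (fun _ : P => ℂ) 2) (y : P),
      f y = @inner ℂ _ _ (lp.single 2 y (1:ℂ)) f := by
    intro f y
    rw [lp.inner_single_left]; simp
  -- the adjoint on basis vectors
  have adj_single : ∀ (r y : P),
      ContinuousLinearMap.adjoint (L r) (lp.single 2 y 1) =
        if h : (r : G)⁻¹ * y ∈ P then lp.single 2 (⟨(r : G)⁻¹ * y, h⟩ : P) 1 else 0 := by
    intro r y
    apply lp.ext
    funext x
    rw [show (ContinuousLinearMap.adjoint (L r) (lp.single 2 y 1)) x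
        = @inner ℂ _ _ (lp.single 2 x (1:ℂ))
            (ContinuousLinearMap.adjoint (L r) (lp.single 2 y 1)) from coord _ _,
      ContinuousLinearMap.adjoint_inner_right, hL, lp.inner_single_left]
    simp only [RCLike.inner_apply, map_one, one_mul, lp.single_apply]
    by_cases h : (r : G)⁻¹ * y ∈ P
    · rw [dif_pos h]
      by_cases hx : x = (⟨(r : G)⁻¹ * y, h⟩ : P)
      · have hy : r * x = y := by
          ext; rw [hx]; push_cast; group
        subst hx
        rw [hy, Pi.single_eq_same, lp.single_apply_self]
        simp
      · have hne : r * x ≠ y := by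
          intro hc; apply hx; ext
          have := congrArg (Subtype.val) hc
          simp only [Submonoid.coe_mul] at this
          push_cast
          rw [← this]; group
        rw [Pi.single_eq_of_ne hne, lp.single_apply_ne 2 _ _ hx, zero_mul]
    · have hne : r * x ≠ y := by
        intro hc; apply h
        have := congrArg (Subtype.val) hc
        simp only [Submonoid.coe_mul] at this
        rw [← this]
        have : (r : G)⁻¹ * ((r : G) * (x : G)) = (x : G) := by group
        rw [this]; exact x.2
      rw [dif_neg h, Pi.single_eq_of_ne hne]
      simp
  -- the range projections on basis vectors
  have proj_single : ∀ (r y : P),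
      (L r * ContinuousLinearMap.adjoint (L r)) (lp.single 2 y 1) =
        if (r : G)⁻¹ * y ∈ P then lp.single 2 y 1 else 0 := by
    intro r y
    rw [ContinuousLinearMap.mul_apply, adj_single]
    by_cases h : (r : G)⁻¹ * y ∈ P
    · rw [dif_pos h, if_pos h, hL]
      congr 1
      ext; push_cast; group
    · rw [dif_neg h, if_neg h, map_zero]
  -- coordinates of the product applied to an arbitrary vector
  have key : ∀ (f : lp (fun _ : P => ℂ) 2) (y : P),
      ((L p * ContinuousLinearMap.adjoint (L p) * (L q * ContinuousLinearMap.adjoint (L q))) f) y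
        = if ((p : G)⁻¹ * y ∈ P ∧ (q : G)⁻¹ * y ∈ P) then f y else 0 := by
    intro f y
    rw [coord _ y, ← ContinuousLinearMap.adjoint_inner_left]
    have hadj : ContinuousLinearMap.adjoint
        (L p * ContinuousLinearMap.adjoint (L p) * (L q * ContinuousLinearMap.adjoint (L q)))
        (lp.single 2 y 1)
        = (L q * ContinuousLinearMap.adjoint (L q))
            ((L p * ContinuousLinearMap.adjoint (L p)) (lp.single 2 y 1)) := by
      rw [← ContinuousLinearMap.mul_apply]
      congr 1
      simp only [ContinuousLinearMap.mul_def, ContinuousLinearMap.adjoint_comp,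
        ContinuousLinearMap.adjoint_adjoint]
    rw [hadj, proj_single]
    by_cases hp : (p : G)⁻¹ * y ∈ P
    · rw [if_pos hp, proj_single]
      by_cases hq : (q : G)⁻¹ * y ∈ P
      · rw [if_pos hq, if_pos ⟨hp, hq⟩, ← coord]
      · rw [if_neg hq, if_neg (by tauto)]
        simp
    · rw [if_neg hp, map_zero, if_neg (by tauto)]
      simp
  constructor
  · rintro m ⟨hmp, hmq, hm⟩
    ext f y
    rw [key, show ((L m * ContinuousLinearMap.adjoint (L m)) f) y
        = @inner ℂ _ _ (lp.single 2 y (1:ℂ)) ((L m * ContinuousLinearMap.adjoint (L m)) f)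
        from coord _ _, ← ContinuousLinearMap.adjoint_inner_left]
    have hadj2 : ContinuousLinearMap.adjoint (L m * ContinuousLinearMap.adjoint (L m))
        (lp.single 2 y 1) = (L m * ContinuousLinearMap.adjoint (L m)) (lp.single 2 y 1) := by
      congr 1
      simp only [ContinuousLinearMap.mul_def, ContinuousLinearMap.adjoint_comp,
        ContinuousLinearMap.adjoint_adjoint]
    rw [hadj2, proj_single]
    have hiff : ((p : G)⁻¹ * y ∈ P ∧ (q : G)⁻¹ * y ∈ P) ↔ (m : G)⁻¹ * y ∈ P := by
      constructor
      · rintro ⟨h1, h2⟩; exact hm y h1 h2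
      · intro h
        constructor
        · have := mul_mem hmp h
          rwa [show (p : G)⁻¹ * m * ((m : G)⁻¹ * y) = (p : G)⁻¹ * y by group] at this
        · have := mul_mem hmq h
          rwa [show (q : G)⁻¹ * m * ((m : G)⁻¹ * y) = (q : G)⁻¹ * y by group] at this
    by_cases h : (m : G)⁻¹ * y ∈ P
    · rw [if_pos h, if_pos (hiff.mpr h), ← coord]
    · rw [if_neg h, if_neg (fun hc => h (hiff.mp hc))]
      simp
  · intro hno
    ext f y
    rw [key, if_neg]
    · simp
    · rintro ⟨h1, h2⟩
      exact hno ⟨y, h1, h2⟩
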